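/- Let U be an ultrafilter on a set X, let φ : X → Ordinal be a function, and let ⟨U_x : x ∈ X⟩ be a family of ultrafilters on X such that U is the U-limit of ⟨U_x : x ∈ X⟩, i.e., for every A ⊆ X, A ∈ U if and only if {x ∈ X : A ∈ U_x} ∈ U. Then for U-almost all x ∈ X, the set {y ∈ X : φ(x) ≤ φ(y)} belongs to U_x; equivalently, the set {x ∈ X : {y ∈ X : φ(y) < φ(x)} ∈ U_x} does not belong to U. -/
import Mathlib


open Filter Set Cardinal

universe u v w

/-- The left tensor product `F ⋉ G` of two filters. -/
def ltimes {X : Type u} {Y : Type v} (F : Filter X) (G : Filter Y) :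
    Filter (X × Y) where
  sets := {R | {x | {y | (x, y) ∈ R} ∈ G} ∈ F}
  univ_sets := by simp
  sets_of_superset := by
    intro R S hR hRS
    refine Filter.mem_of_superset hR ?_
    intro x hx
    exact Filter.mem_of_superset hx fun y hy => hRS hy
  inter_sets := by
    intro R S hR hS
    refine Filter.mem_of_superset (Filter.inter_mem hR hS) ?_
    rintro x ⟨hx1, hx2⟩
    exact Filter.inter_mem hx1 hx2

/-- The right tensor product `F ⋊ G` of two filters. -/
def rtimes {X : Type u} {Y : Type v} (F : Filter X) (G : Filter Y) :
    Filter (X × Y) where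
  sets := {R | {y | {x | (x, y) ∈ R} ∈ F} ∈ G}
  univ_sets := by simp
  sets_of_superset := by
    intro R S hR hRS
    refine Filter.mem_of_superset hR ?_
    intro y hy
    exact Filter.mem_of_superset hy fun x hx => hRS hx
  inter_sets := by
    intro R S hR hS
    refine Filter.mem_of_superset (Filter.inter_mem hR hS) ?_
    rintro y ⟨hy1, hy2⟩
    exact Filter.inter_mem hy1 hy2

/-- `IsFClosed F G` means: `G` is `F`-closed. -/
def IsFClosed {X : Type u} {Y : Type v} (F : Filter X) (G : Filter Y) : Prop :=
  ∀ B : X → Set Y, (∀ x, B x ∈ G) → ∃ A ∈ F, (⋂ x ∈ A, B x) ∈ G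

/-- `IsRegularFor F G` means: `F` is `G`-regular. -/
def IsRegularFor {X : Type u} {Y : Type v} (F : Filter X) (G : Filter Y) : Prop :=
  ∃ A : Y → Set X, (∀ y, A y ∈ F) ∧ ∀ B : Set Y, Bᶜ ∉ G → (⋂ y ∈ B, A y) = ∅

/-- The Katetov order on filters: `G ≤kat H` iff some pushforward of `H` extends `G`. -/
def Katetov {Y : Type u} {Z : Type v} (G : Filter Y) (H : Filter Z) : Prop :=
  ∃ f : Z → Y, Filter.map f H ≤ G

/-- A filter is an ultrafilter. -/
def IsUltra {α : Type u} (F : Filter α) : Prop :=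
  ∃ V : Ultrafilter α, (V : Filter α) = F

/-- `(λ, η)`-indecomposability of a filter. -/
def Indecomposable {X : Type u} (F : Filter X) (lam eta : Cardinal.{u}) : Prop :=
  ∀ P : Set (Set X), #P ≤ eta → ⋃₀ P ∈ F →
    ∃ Q ⊆ P, #Q < lam ∧ ⋃₀ Q ∈ F

/-- `λ`-decomposability: the negation of `(λ, λ)`-indecomposability. -/
def Decomposable {X : Type u} (F : Filter X) (lam : Cardinal.{u}) : Prop :=
  ¬ Indecomposable F lam lam

/-- `(κ, δ)`-regularity of a filter. -/
def CardRegular {X : Type u} (F : Filter X) (kappa delta : Cardinal.{u}) : Prop :=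
  ∃ B : delta.out → Set X, (∀ α, B α ∈ F) ∧
    ∀ σ : Set delta.out, kappa ≤ #σ → (⋂ α ∈ σ, B α) = ∅

/-- The Fréchet filter `F_λ(λ)`: subsets of (a set of size) `λ` whose complement
has cardinality less than `λ`. -/
def frechetFilter (lam : Cardinal.{u}) (h : ℵ₀ ≤ lam) : Filter lam.out where
  sets := {A | #(Aᶜ : Set lam.out) < lam}
  univ_sets := by
    have : #((Set.univ : Set lam.out)ᶜ : Set lam.out) = 0 := by simp
    simp only [Set.mem_setOf_eq, this]
    exact lt_of_lt_of_le aleph0_pos h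
  sets_of_superset := by
    intro A B hA hAB
    exact lt_of_le_of_lt (Cardinal.mk_le_mk_of_subset (Set.compl_subset_compl.mpr hAB)) hA
  inter_sets := by
    intro A B hA hB
    simp only [Set.mem_setOf_eq, Set.compl_inter]
    exact lt_of_le_of_lt (Cardinal.mk_union_le _ _) (Cardinal.add_lt_of_lt h hA hB)

/-- The dual of a filter `F` on `X`: the family of complements of members of `F`. -/
def dualFamily {X : Type u} (F : Filter X) : Set (Set X) := {s | sᶜ ∈ F}

/-- The fine filter `𝔽(F)` on the dual of `F`, generated by the sets
`{σ ∈ F* | x ∈ σ}` for `x ∈ X`. -/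
def fineFilter {X : Type u} (F : Filter X) : Filter (dualFamily F) :=
  Filter.generate (Set.range fun x : X => {σ : dualFamily F | x ∈ σ.1})

theorem ketonen_irrefl {X : Type u} (U : Ultrafilter X)
    (phi : X → Ordinal.{v}) (Ux : X → Ultrafilter X)
    (hlim : ∀ A : Set X, A ∈ U ↔ {x | A ∈ Ux x} ∈ U) :
    {x | {y | phi x ≤ phi y} ∈ Ux x} ∈ U ∧
      {x | {y | phi y < phi x} ∈ Ux x} ∉ U := by

  have hwf : WellFounded (fun y x : X => phi y < phi x) :=
    InvImage.wf phi Ordinal.lt_wf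
  set F : ∀ x : X, (∀ y : X, phi y < phi x → Prop) → Prop :=
    fun x ih => ¬ ({y | ∃ h : phi y < phi x, ih y h} ∈ Ux x) with hF
  set p : X → Prop := fun x => hwf.fix F x with hpdef
  have hp : ∀ x, p x ↔ ¬ ({y | phi y < phi x ∧ p y} ∈ Ux x) := by
    intro x
    have h1 : p x = F x (fun y _ => p y) := hwf.fix_eq F x
    have h2 : {y | ∃ _h : phi y < phi x, p y} = {y | phi y < phi x ∧ p y} := by
      ext y; exact exists_prop
    rw [h1, hF]
    simp only [h2]
  set A : Set X := {x | p x} with hAdef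
  have hAx : ∀ x, {y | phi y < phi x} ∈ Ux x → (A ∈ Ux x ↔ x ∉ A) := by
    intro x hB
    have hinter : {y | phi y < phi x ∧ p y} = A ∩ {y | phi y < phi x} := by
      ext y
      simp only [hAdef, Set.mem_setOf_eq, Set.mem_inter_iff, and_comm]
    have h3 : A ∈ Ux x ↔ {y | phi y < phi x ∧ p y} ∈ Ux x := by
      constructor
      · intro hA
        rw [hinter]
        exact Filter.inter_mem hA hB
      · intro h
        rw [hinter] at h
        exact Filter.mem_of_superset h Set.inter_subset_left
    have h4 : x ∈ A ↔ p x := Iff.rfl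
    rw [h3, h4, hp x]
    tauto
  have key : {x | {y | phi y < phi x} ∈ Ux x} ∉ U := by
    intro hT
    by_cases hAU : A ∈ U
    · have hS : {x | A ∈ Ux x} ∈ U := (hlim A).mp hAU
      have hsub : {x | {y | phi y < phi x} ∈ Ux x} ∩ {x | A ∈ Ux x} ⊆ Aᶜ := by
        rintro x ⟨hxT, hxS⟩
        exact (hAx x hxT).mp hxS
      have hAc : Aᶜ ∈ U := Filter.mem_of_superset (Filter.inter_mem hT hS) hsub
      exact (Ultrafilter.compl_mem_iff_notMem.mp hAc) hAU
    · have hAc : Aᶜ ∈ U := Ultrafilter.compl_mem_iff_notMem.mpr hAU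
      have hsub : {x | {y | phi y < phi x} ∈ Ux x} ∩ Aᶜ ⊆ {x | A ∈ Ux x} := by
        rintro x ⟨hxT, hxA⟩
        exact (hAx x hxT).mpr hxA
      exact hAU ((hlim A).mpr (Filter.mem_of_superset (Filter.inter_mem hT hAc) hsub))
  refine ⟨?_, key⟩
  have hcompl : {x | {y | phi x ≤ phi y} ∈ Ux x} = {x | {y | phi y < phi x} ∈ Ux x}ᶜ := by
    ext x
    simp only [Set.mem_setOf_eq, Set.mem_compl_iff]
    have : {y | phi x ≤ phi y} = {y | phi y < phi x}ᶜ := by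
      ext y; simp [not_lt]
    rw [this]
    exact Ultrafilter.compl_mem_iff_notMem
  rw [hcompl]
  exact Ultrafilter.compl_mem_iff_notMem.mpr key
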